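/- Let P and Q be Borel probability measures on ℝ^p × ℝ^q with first marginals P_X and Q_X, and let ρ ∈ (0,1) and M = (1−ρ)P + ρQ. Suppose there is a Borel set A ⊆ ℝ^p with P_X(A) = 1 and Q_X(A) = 0 (the first marginals are mutually singular). Then the conditional (disintegration) kernel of M given the first coordinate agrees with the conditional kernel of P for P_X-almost every x, and agrees with the conditional kernel of Q for Q_X-almost every x. -/

import Mathlib

open MeasureTheory ProbabilityTheory
open scoped ENNReal

/-- disintegration of a mixture with mutually singular first
marginals: let `P, Q` be Borel probability measures on `ℝ^p × ℝ^q` and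
`M = (1-ρ) P + ρ Q` with `ρ ∈ (0,1)`. If there is a Borel set `A` with
`P_X(A) = 1` and `Q_X(A) = 0`, then the conditional (disintegration) kernel of `M`
given the first coordinate agrees with that of `P` for `P_X`-a.e. `x`, and with
that of `Q` for `Q_X`-a.e. `x`. -/
theorem mixture_condKernel {p q : ℕ} (hp : 1 ≤ p) (hq : 1 ≤ q)
    (P Q M : Measure (EuclideanSpace ℝ (Fin p) × EuclideanSpace ℝ (Fin q)))
    [IsProbabilityMeasure P] [IsProbabilityMeasure Q] [IsFiniteMeasure M]
    (ρ : ℝ) (hρ : ρ ∈ Set.Ioo (0:ℝ) 1)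
    (hM : M = ENNReal.ofReal (1 - ρ) • P + ENNReal.ofReal ρ • Q)
    (A : Set (EuclideanSpace ℝ (Fin p))) (hA : MeasurableSet A)
    (hPA : P.fst A = 1) (hQA : Q.fst A = 0) :
    (∀ᵐ x ∂P.fst, M.condKernel x = P.condKernel x) ∧
      (∀ᵐ x ∂Q.fst, M.condKernel x = Q.condKernel x) := by
  classical
  obtain ⟨hρ0, hρ1⟩ := hρ
  set c₁ : ℝ≥0∞ := ENNReal.ofReal (1 - ρ) with hc₁
  set c₂ : ℝ≥0∞ := ENNReal.ofReal ρ with hc₂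
  have hc₁0 : c₁ ≠ 0 := by
    simp [hc₁, ENNReal.ofReal_eq_zero]; linarith
  have hc₂0 : c₂ ≠ 0 := by
    simp [hc₂, ENNReal.ofReal_eq_zero]; linarith
  have hc₁top : c₁ ≠ ∞ := ENNReal.ofReal_ne_top
  have hc₂top : c₂ ≠ ∞ := ENNReal.ofReal_ne_top
  -- the candidate kernel
  set κ := Kernel.piecewise hA P.condKernel Q.condKernel with hκdef
  have hMfst : M.fst = c₁ • P.fst + c₂ • Q.fst := by
    rw [hM, Measure.fst_add]
    simp only [Measure.fst, Measure.map_smul]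
  -- κ agrees a.e. with P.condKernel and Q.condKernel
  have hAae : ∀ᵐ x ∂P.fst, x ∈ A := by
    rw [MeasureTheory.ae_iff]
    have : P.fst Aᶜ = 0 := by
      have := measure_compl hA (measure_ne_top P.fst A)
      rw [hPA] at this
      simpa using this
    exact this
  have hAcae : ∀ᵐ x ∂Q.fst, x ∉ A := by
    rw [MeasureTheory.ae_iff]
    simpa using hQA
  have hκP : ∀ᵐ x ∂P.fst, κ x = P.condKernel x := by
    filter_upwards [hAae] with x hx
    simp [hκdef, Kernel.piecewise_apply, hx]
  have hκQ : ∀ᵐ x ∂Q.fst, κ x = Q.condKernel x := by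
    filter_upwards [hAcae] with x hx
    simp [hκdef, Kernel.piecewise_apply, hx]
  -- M = M.fst ⊗ₘ κ
  have hcomp : M = M.fst ⊗ₘ κ := by
    rw [hMfst, Measure.compProd_add_left, Measure.compProd_smul_left,
      Measure.compProd_smul_left, Measure.compProd_congr hκP, Measure.compProd_congr hκQ,
      Measure.disintegrate P P.condKernel, Measure.disintegrate Q Q.condKernel, hM]
  have huniq : ∀ᵐ x ∂M.fst, κ x = M.condKernel x :=
    eq_condKernel_of_measure_eq_compProd κ hcomp
  -- transfer a.e. from M.fst to P.fst and Q.fst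
  have hPac : P.fst ≪ M.fst := by
    rw [hMfst]
    refine Measure.AbsolutelyContinuous.mk fun s hs hsnull => ?_
    simp only [Measure.add_apply, Measure.smul_apply, smul_eq_mul,
      add_eq_zero, mul_eq_zero] at hsnull
    rcases hsnull.1 with h | h
    · exact absurd h hc₁0
    · exact h
  have hQac : Q.fst ≪ M.fst := by
    rw [hMfst]
    refine Measure.AbsolutelyContinuous.mk fun s hs hsnull => ?_
    simp only [Measure.add_apply, Measure.smul_apply, smul_eq_mul,
      add_eq_zero, mul_eq_zero] at hsnull
    rcases hsnull.2 with h | h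
    · exact absurd h hc₂0
    · exact h
  constructor
  · filter_upwards [hPac.ae_le huniq, hκP] with x h1 h2
    rw [← h1, h2]
  · filter_upwards [hQac.ae_le huniq, hκQ] with x h1 h2
    rw [← h1, h2]
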